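/- Let p₀, p₁, p₂ be distinct primes with p₂ > p₁ and let s be a positive integer. If e is an integer with e > 3s², and there exist positive integers f₁, f₂ such that p₀^{f_i} divides σ(p_i^{e−1}) and p₀^{f_i} ≥ σ(p_i^{e−1})^{1/s} for i = 1, 2, then log p₂ > (9/8)·log p₁. -/

import Mathlib

open Finset ArithmeticFunction
open scoped ArithmeticFunction.sigma


lemma geom_split (q n : ℕ) :
    ∑ i ∈ range (2 * n), q ^ i = (1 + q) * ∑ i ∈ range n, (q ^ 2) ^ i := by
  induction n with
  | zero => simp
  | succ n ih =>
      have h2 : 2 * (n + 1) = (2 * n) + 1 + 1 := by ring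
      rw [h2, sum_range_succ, sum_range_succ, ih, sum_range_succ]
      ring

lemma geom_parity (q n : ℕ) (hq : q % 2 = 1) :
    (∑ i ∈ range n, q ^ i) % 2 = n % 2 := by
  induction n with
  | zero => simp
  | succ n ih =>
      rw [sum_range_succ, Nat.add_mod, ih, Nat.pow_mod, hq]
      simp [Nat.add_mod]

-- L3
lemma two_pow_le_of_dvd_geom_aux (n : ℕ) : ∀ q g : ℕ, q % 4 = 1 → 0 < n →
    2 ^ g ∣ ∑ i ∈ range n, q ^ i → 2 ^ g ≤ 2 * n := by
  induction n using Nat.strong_induction_on with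
  | _ n ih =>
    intro q g hq hn hd
    rcases Nat.even_or_odd n with he | ho
    · -- n = 2 n'
      obtain ⟨n', rfl⟩ : ∃ n', n = 2 * n' := ⟨n / 2, by
        rcases he with ⟨t, ht⟩; omega⟩
      have hn' : 0 < n' := by omega
      rw [geom_split] at hd
      have hq2 : q % 2 = 1 := by omega
      have hq4 : (q ^ 2) % 4 = 1 := by
        obtain ⟨k, hk⟩ : ∃ k, q = 4 * k + 1 := ⟨q / 4, by omega⟩
        have h : q ^ 2 = 4 * (4 * k * k + 2 * k) + 1 := by subst hk; ring
        omega
      rcases Nat.eq_zero_or_pos g with rfl | hg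
      · simpa using by omega
      · obtain ⟨w, hw⟩ : ∃ w, 1 + q = 2 * w := ⟨(1 + q) / 2, by omega⟩
        have hwodd : w % 2 = 1 := by omega
        obtain ⟨g', rfl⟩ : ∃ g', g = g' + 1 := ⟨g - 1, by omega⟩
        rw [hw, pow_succ, mul_comm (2 ^ g') 2, mul_assoc] at hd
        have hd' : 2 ^ g' ∣ w * ∑ i ∈ range n', (q ^ 2) ^ i :=
          (Nat.mul_dvd_mul_iff_left (by norm_num : 0 < 2)).1 hd
        have hcw : Nat.Coprime 2 w := by
          rw [Nat.prime_two.coprime_iff_not_dvd]; omega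
        have hd'' : 2 ^ g' ∣ ∑ i ∈ range n', (q ^ 2) ^ i :=
          (Nat.Coprime.pow_left g' hcw).dvd_of_dvd_mul_left hd'
        have hle := ih n' (by omega) (q ^ 2) g' hq4 hn' hd''
        have : (2:ℕ) ^ (g' + 1) = 2 * 2 ^ g' := by ring
        omega
    · have hq2 : q % 2 = 1 := by omega
      have hpar := geom_parity q n hq2
      have hn2 : n % 2 = 1 := Nat.odd_iff.1 ho
      have hg : g = 0 := by
        by_contra hg0
        have h2 : 2 ∣ ∑ i ∈ range n, q ^ i :=
          dvd_trans (dvd_pow_self 2 hg0) hd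
        omega
      subst hg; simpa using by omega

-- L4
lemma two_pow_le_of_dvd_geom (q n g : ℕ) (hq : q % 2 = 1) (hn : 0 < n)
    (hd : 2 ^ g ∣ ∑ i ∈ range n, q ^ i) : 2 ^ g ≤ (q + 1) * n := by
  rcases Nat.even_or_odd n with he | ho
  · obtain ⟨n', rfl⟩ : ∃ n', n = 2 * n' := ⟨n / 2, by rcases he with ⟨t, ht⟩; omega⟩
    have hn' : 0 < n' := by omega
    rw [geom_split] at hd
    have hq4 : (q ^ 2) % 4 = 1 := by
      obtain ⟨k, hk⟩ : ∃ k, q = 2 * k + 1 := ⟨q / 2, by omega⟩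
      have h : q ^ 2 = 4 * (k * k + k) + 1 := by subst hk; ring
      omega
    set A := ∑ i ∈ range n', (q ^ 2) ^ i with hA
    have hApos : 0 < A := by
      apply Finset.sum_pos
      · intro i _; exact pow_pos (pow_pos (by omega : 0 < q) 2) i
      · exact ⟨0, mem_range.2 hn'⟩
    have hqpos : 0 < 1 + q := by omega
    -- g ≤ v₂(1+q) + v₂(A)
    have hne : (1 + q) * A ≠ 0 := by positivity
    have hg : g ≤ ((1 + q) * A).factorization 2 :=
      (Nat.Prime.pow_dvd_iff_le_factorization Nat.prime_two hne).1 hd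
    rw [Nat.factorization_mul (by omega) (by omega)] at hg
    simp only [Finsupp.add_apply] at hg
    set a := (1 + q).factorization 2
    set b := A.factorization 2
    have h2a : 2 ^ a ≤ 1 + q := Nat.le_of_dvd hqpos (Nat.ordProj_dvd _ 2)
    have h2b : 2 ^ b ≤ 2 * n' :=
      two_pow_le_of_dvd_geom_aux n' (q ^ 2) b hq4 hn' (Nat.ordProj_dvd A 2)
    calc 2 ^ g ≤ 2 ^ (a + b) := Nat.pow_le_pow_right (by norm_num) hg
    _ = 2 ^ a * 2 ^ b := pow_add 2 a b
    _ ≤ (1 + q) * (2 * n') := Nat.mul_le_mul h2a h2b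
    _ = (q + 1) * (2 * n') := by ring
  · have hpar := geom_parity q n hq
    have hn2 : n % 2 = 1 := Nat.odd_iff.1 ho
    have hg : g = 0 := by
      by_contra hg0
      have h2 : 2 ∣ ∑ i ∈ range n, q ^ i := dvd_trans (dvd_pow_self 2 hg0) hd
      omega
    subst hg
    have h1 : 0 < (q + 1) * n := by positivity
    omega


-- L5
lemma succ_pow_le_three_mul (n s : ℕ) (hs : s ≤ n) (hn : 0 < n) :
    (n + 1) ^ s ≤ 3 * n ^ s := by
  have hn' : (0:ℝ) < n := by exact_mod_cast hn
  have key : ((n:ℝ) + 1) ^ s ≤ 3 * (n:ℝ) ^ s := by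
    have h1 : (n:ℝ) + 1 ≤ n * Real.exp (1 / n) := by
      have h := Real.add_one_le_exp (1 / (n:ℝ))
      have h2 : (n:ℝ) * (1 / n + 1) ≤ n * Real.exp (1 / n) :=
        mul_le_mul_of_nonneg_left h (le_of_lt hn')
      calc (n:ℝ) + 1 = n * (1 / n + 1) := by field_simp; ring
      _ ≤ n * Real.exp (1 / n) := h2
    calc ((n:ℝ) + 1) ^ s ≤ (n * Real.exp (1 / n)) ^ s := by
          apply pow_le_pow_left₀ (by positivity) h1
    _ = (n:ℝ) ^ s * Real.exp (1 / n) ^ s := mul_pow _ _ _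
    _ = (n:ℝ) ^ s * Real.exp (s * (1 / n)) := by rw [← Real.exp_nat_mul]
    _ ≤ (n:ℝ) ^ s * Real.exp 1 := by
          apply mul_le_mul_of_nonneg_left _ (by positivity)
          apply Real.exp_le_exp.2
          rw [mul_one_div, div_le_one hn']
          exact_mod_cast hs
    _ ≤ (n:ℝ) ^ s * 3 := by
          apply mul_le_mul_of_nonneg_left _ (by positivity)
          linarith [Real.exp_one_lt_d9]
    _ = 3 * (n:ℝ) ^ s := by ring
  exact_mod_cast key

-- L6
lemma six_sq_lt (s : ℕ) (hs : 1 ≤ s) : 6 * s ^ 2 + 2 < 3 ^ (3 * s - 1) := by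
  induction s, hs using Nat.le_induction with
  | base => norm_num
  | succ s hs ih =>
      have h1 : 3 * (s + 1) - 1 = (3 * s - 1) + 3 := by omega
      rw [h1, pow_add]
      nlinarith [ih]

-- L7
lemma two_K_pow_lt (s K : ℕ) (hs : 1 ≤ s) (hK : 3 * s ^ 2 ≤ K) :
    (2 * K + 2) ^ s < 3 ^ (K - s) := by
  have hsK : s ≤ 3 * s ^ 2 := by nlinarith
  induction K, hK using Nat.le_induction with
  | base =>
      have h1 : 3 * s ^ 2 - s = (3 * s - 1) * s := by
        have hss : s ^ 2 = s * s := sq s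
        have h2 : (3 * s - 1) * s = 3 * s * s - 1 * s := Nat.sub_mul _ _ _
        have h3 : 3 * s * s = 3 * (s * s) := by ring
        omega
      rw [h1, pow_mul]
      have h2 : 2 * (3 * s ^ 2) + 2 = 6 * s ^ 2 + 2 := by ring
      rw [h2]
      exact Nat.pow_lt_pow_left (six_sq_lt s hs) (by omega)
  | succ K hK ih =>
      have hstep : (2 * (K + 1) + 2) ^ s ≤ 3 * (2 * K + 2) ^ s := by
        have e1 : 2 * (K + 1) + 2 = 2 * (K + 2) := by ring
        have e2 : 2 * K + 2 = 2 * (K + 1) := by ring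
        rw [e1, e2, mul_pow, mul_pow]
        have := succ_pow_le_three_mul (K + 1) s (by omega) (by omega)
        calc 2 ^ s * (K + 2) ^ s = 2 ^ s * ((K + 1) + 1) ^ s := by ring_nf
        _ ≤ 2 ^ s * (3 * (K + 1) ^ s) := Nat.mul_le_mul_left _ this
        _ = 3 * (2 ^ s * (K + 1) ^ s) := by ring
      have h3 : (K + 1) - s = (K - s) + 1 := by omega
      rw [h3, pow_succ]
      calc (2 * (K + 1) + 2) ^ s ≤ 3 * (2 * K + 2) ^ s := hstep
      _ < 3 * 3 ^ (K - s) := by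
            have := ih
            omega
      _ = 3 ^ (K - s) * 3 := by ring

-- L8
lemma p_plus_one_K_lt (p s K : ℕ) (hp : 3 ≤ p) (hs : 1 ≤ s) (hK : 3 * s ^ 2 ≤ K) :
    ((p + 1) * (K + 1)) ^ s < p ^ K := by
  have hsK : s ≤ K := le_trans (by nlinarith) hK
  calc ((p + 1) * (K + 1)) ^ s ≤ (p * (2 * K + 2)) ^ s := by
        apply Nat.pow_le_pow_left
        nlinarith
  _ = p ^ s * (2 * K + 2) ^ s := mul_pow _ _ _
  _ < p ^ s * 3 ^ (K - s) := by
        have h1 := two_K_pow_lt s K hs hK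
        have h2 : 0 < p ^ s := pow_pos (by omega) s
        exact Nat.mul_lt_mul_of_le_of_lt (le_refl _) h1 h2
  _ ≤ p ^ s * p ^ (K - s) := by
        apply Nat.mul_le_mul_left
        exact Nat.pow_le_pow_left (by omega) _
  _ = p ^ K := by rw [← pow_add]; congr 1; omega


lemma roots_count_le (p m e : ℕ) (hp : p.Prime) (hodd : Odd p) (hm : 0 < m) (he : 0 < e)
    [NeZero (p ^ m)] :
    (Finset.univ.filter fun z : ZMod (p ^ m) => z ^ e = 1).card ≤ e := by
  haveI : Fact p.Prime := ⟨hp⟩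
  have hp2 : 2 ≤ p := hp.two_le
  set v := e.factorization p with hv
  set k := min v m with hk
  set e' := e / p ^ v with he'def
  have hpe : p ^ v * e' = e := Nat.ordProj_mul_ordCompl_eq_self e p
  have he'pos : 0 < e' := Nat.ordCompl_pos p he.ne'
  have hppos : 0 < p := hp.pos
  have hdvd_pm : p ∣ p ^ m := dvd_pow_self p hm.ne'
  set S := Finset.univ.filter fun z : ZMod (p ^ m) => z ^ e = 1 with hS
  set S₁ := Finset.univ.filter fun w : ZMod p => w ^ e' = 1 with hS₁
  set Φ : ZMod (p ^ m) → ZMod p × ℕ :=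
    fun z => (ZMod.castHom hdvd_pm (ZMod p) z, z.val / p ^ (m - k)) with hΦ
  have unit_of_mem : ∀ z : ZMod (p ^ m), z ^ e = 1 → IsUnit z := by
    intro z hz
    exact IsUnit.of_mul_eq_one (a := z) (z ^ (e - 1)) (by
      rw [← pow_succ', Nat.sub_add_cancel he]; exact hz)
  have cast_ne_zero : ∀ z : ZMod (p ^ m), z ^ e = 1 →
      (ZMod.castHom hdvd_pm (ZMod p) z) ≠ 0 := by
    intro z hz
    exact ((unit_of_mem z hz).map (ZMod.castHom hdvd_pm (ZMod p))).ne_zero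
  -- Step A
  have hmaps : ∀ z ∈ S, Φ z ∈ S₁ ×ˢ Finset.range (p ^ k) := by
    intro z hz
    rw [hS, mem_filter] at hz
    obtain ⟨-, hz⟩ := hz
    rw [Finset.mem_product]
    constructor
    · rw [hS₁, mem_filter]
      refine ⟨Finset.mem_univ _, ?_⟩
      set w := ZMod.castHom hdvd_pm (ZMod p) z with hw
      have hwe : w ^ e = 1 := by rw [hw, ← map_pow, hz, map_one]
      have hwne : w ≠ 0 := cast_ne_zero z hz
      have hw1 : w ^ (p - 1) = 1 := ZMod.pow_card_sub_one_eq_one hwne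
      have hord : orderOf w ∣ Nat.gcd e (p - 1) :=
        Nat.dvd_gcd (orderOf_dvd_of_pow_eq_one hwe) (orderOf_dvd_of_pow_eq_one hw1)
      have hgcd_e' : Nat.gcd e (p - 1) ∣ e' := by
        have hnd : ¬ p ∣ Nat.gcd e (p - 1) := by
          intro hpd
          have h2 : p ∣ p - 1 := hpd.trans (Nat.gcd_dvd_right _ _)
          have h3 := Nat.le_of_dvd (by omega) h2
          omega
        have hcop : Nat.Coprime (Nat.gcd e (p - 1)) (p ^ v) :=
          Nat.Coprime.pow_right _ (Nat.coprime_comm.1 (hp.coprime_iff_not_dvd.2 hnd))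
        exact hcop.dvd_of_dvd_mul_left (by rw [hpe]; exact Nat.gcd_dvd_left _ _)
      exact orderOf_dvd_iff_pow_eq_one.1 (hord.trans hgcd_e')
    · rw [Finset.mem_range]
      have hval : z.val < p ^ m := ZMod.val_lt z
      have hsplit : p ^ k * p ^ (m - k) = p ^ m := by
        rw [← pow_add]; congr 1; omega
      rw [Nat.div_lt_iff_lt_mul (pow_pos hppos _), hsplit]
      exact hval
  -- Step B
  have hinj : Set.InjOn Φ S := by
    intro z₁ hz₁ z₂ hz₂ heq
    simp only [hS, Finset.coe_filter, Set.mem_setOf_eq] at hz₁ hz₂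
    obtain ⟨-, hz₁⟩ := hz₁; obtain ⟨-, hz₂⟩ := hz₂
    have h1 : ZMod.castHom hdvd_pm (ZMod p) z₁ = ZMod.castHom hdvd_pm (ZMod p) z₂ :=
      congrArg Prod.fst heq
    have h2 : z₁.val / p ^ (m - k) = z₂.val / p ^ (m - k) := congrArg Prod.snd heq
    set Z := z₁.val with hZ
    set W := z₂.val with hW
    have hcast1 : ZMod.castHom hdvd_pm (ZMod p) z₁ = ((Z : ℕ) : ZMod p) := by
      rw [ZMod.castHom_apply, ← ZMod.natCast_val]
    have hcast2 : ZMod.castHom hdvd_pm (ZMod p) z₂ = ((W : ℕ) : ZMod p) := by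
      rw [ZMod.castHom_apply, ← ZMod.natCast_val]
    have hmodp : Z ≡ W [MOD p] := by
      rw [← ZMod.natCast_eq_natCast_iff]
      rw [← hcast1, ← hcast2]; exact h1
    have hdvd1 : (p : ℤ) ∣ (Z : ℤ) - (W : ℤ) := by
      have := Nat.ModEq.dvd hmodp.symm
      exact_mod_cast this
    have hkey : (p : ℤ) ^ (m - k) ∣ (Z : ℤ) - (W : ℤ) := by
      rcases le_or_gt m v with hmv | hvm
      · have h0 : m - k = 0 := by omega
        rw [h0, pow_zero]; exact one_dvd _
      · have hkv : k = v := by omega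
        rcases eq_or_ne (Z : ℤ) (W : ℤ) with hzw | hzw
        · rw [hzw, sub_self]; exact dvd_zero _
        · have hy1 : ((Z : ℕ) : ZMod (p ^ m)) = z₁ := by
            rw [hZ, ZMod.natCast_val, ZMod.cast_id]
          have hy2 : ((W : ℕ) : ZMod (p ^ m)) = z₂ := by
            rw [hW, ZMod.natCast_val, ZMod.cast_id]
          have hPdvd : ((p : ℤ) ^ m) ∣ (Z : ℤ) ^ e - (W : ℤ) ^ e := by
            have h0 : (((Z : ℤ) ^ e - (W : ℤ) ^ e : ℤ) : ZMod (p ^ m)) = 0 := by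
              push_cast
              rw [hy1, hy2, hz₁, hz₂, sub_self]
            have h3 := (ZMod.intCast_zmod_eq_zero_iff_dvd _ (p ^ m)).1 h0
            exact_mod_cast h3
          have hpZnat : ¬ p ∣ Z := by
            intro hpd
            apply cast_ne_zero z₁ hz₁
            rw [hcast1]
            exact (ZMod.natCast_eq_zero_iff _ _).2 hpd
          have hpnZ : ¬ (p : ℤ) ∣ (Z : ℤ) := by exact_mod_cast hpZnat
          have hlte := Int.emultiplicity_pow_sub_pow hp hodd hdvd1 hpnZ e
          have hfin_e : FiniteMultiplicity p e :=
            Nat.finiteMultiplicity_iff.2 ⟨hp.ne_one, he⟩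
          have heme : emultiplicity p e = (v : ℕ∞) := by
            rw [hfin_e.emultiplicity_eq_multiplicity,
              Nat.multiplicity_eq_factorization hp he.ne']
          have hle : (m : ℕ∞) ≤ emultiplicity (p : ℤ) ((Z : ℤ) ^ e - (W : ℤ) ^ e) :=
            le_emultiplicity_of_pow_dvd hPdvd
          rw [hlte, heme] at hle
          have hle2 : ((m - v : ℕ) : ℕ∞) ≤ emultiplicity (p : ℤ) ((Z : ℤ) - (W : ℤ)) := by
            have hmv : (m : ℕ∞) = ((m - v : ℕ) : ℕ∞) + (v : ℕ∞) := by
              rw [← Nat.cast_add]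
              congr 1
              omega
            rw [hmv] at hle
            exact (WithTop.add_le_add_iff_right (ENat.coe_ne_top v)).1 hle
          have h4 := pow_dvd_of_le_emultiplicity hle2
          rwa [hkv]
    have hmodpk : Z ≡ W [MOD p ^ (m - k)] := by
      have hkey' : ((p ^ (m - k) : ℕ) : ℤ) ∣ (Z : ℤ) - (W : ℤ) := by
        push_cast; exact hkey
      exact (Nat.modEq_iff_dvd.2 hkey').symm
    have hZW : Z = W := by
      have hd1 := Nat.div_add_mod Z (p ^ (m - k))
      have hd2 := Nat.div_add_mod W (p ^ (m - k))
      have hmm : Z % p ^ (m - k) = W % p ^ (m - k) := hmodpk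
      rw [h2] at hd1
      omega
    exact ZMod.val_injective _ hZW
  -- Step C+D+E
  have hcard : S.card ≤ S₁.card * p ^ k := by
    have := Finset.card_le_card_of_injOn Φ hmaps hinj
    rwa [Finset.card_product, Finset.card_range] at this
  have hS₁card : S₁.card ≤ e' := by
    classical
    have hinj2 : Set.InjOn (fun w : ZMod p => if h : IsUnit w then h.unit else 1) S₁ := by
      intro w₁ hw₁ w₂ hw₂ heq
      simp only [hS₁, Finset.coe_filter, Set.mem_setOf_eq] at hw₁ hw₂
      have hu₁ : IsUnit w₁ := IsUnit.of_mul_eq_one (a := w₁) (w₁ ^ (e' - 1)) (by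
        rw [← pow_succ', Nat.sub_add_cancel he'pos]; exact hw₁.2)
      have hu₂ : IsUnit w₂ := IsUnit.of_mul_eq_one (a := w₂) (w₂ ^ (e' - 1)) (by
        rw [← pow_succ', Nat.sub_add_cancel he'pos]; exact hw₂.2)
      simp only [dif_pos hu₁, dif_pos hu₂] at heq
      have h5 := congrArg (Units.val) heq
      rwa [IsUnit.unit_spec, IsUnit.unit_spec] at h5
    have hmaps2 : ∀ w ∈ S₁, (if h : IsUnit w then h.unit else 1) ∈
        Finset.univ.filter fun u : (ZMod p)ˣ => u ^ e' = 1 := by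
      intro w hw
      rw [hS₁, mem_filter] at hw
      obtain ⟨-, hw⟩ := hw
      have hu : IsUnit w := IsUnit.of_mul_eq_one (a := w) (w ^ (e' - 1)) (by
        rw [← pow_succ', Nat.sub_add_cancel he'pos]; exact hw)
      rw [mem_filter]
      refine ⟨Finset.mem_univ _, ?_⟩
      rw [dif_pos hu]
      ext
      rw [Units.val_pow_eq_pow_val, IsUnit.unit_spec, hw, Units.val_one]
    have h1 := Finset.card_le_card_of_injOn _ hmaps2 hinj2
    have h2 : (Finset.univ.filter fun u : (ZMod p)ˣ => u ^ e' = 1).card ≤ e' := by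
      have h6 := IsCyclic.card_pow_eq_one_le (α := (ZMod p)ˣ) (n := e') he'pos
      convert h6 using 2
    exact h1.trans h2
  calc S.card ≤ S₁.card * p ^ k := hcard
  _ ≤ e' * p ^ v := Nat.mul_le_mul hS₁card (Nat.pow_le_pow_right hppos (by omega))
  _ = e := by rw [mul_comm]; exact hpe


lemma count_lower (s K : ℕ) (hs : 1 ≤ s) (hK : 3 * s ^ 2 ≤ K) :
    K + 2 ≤ ((Finset.range (K + 1) ×ˢ Finset.range (K + 1)).filter
      (fun q : ℕ × ℕ => 8 * s * q.1 + 9 * s * q.2 ≤ 8 * K)).card := by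
  classical
  set X : ℕ → ℕ := fun y => (8 * K - 9 * s * y) / (8 * s) with hX
  set B : Finset (ℕ × ℕ) :=
    (Finset.range (2 * s)).biUnion
      (fun y => (Finset.range (X y + 1)).image (fun x => (x, y))) with hB
  have h9 : ∀ y, y < 2 * s → 9 * s * y ≤ 8 * K := by
    intro y hy
    have h1 : 9 * s * y + 9 * s = 9 * s * (y + 1) := by ring
    have h2 : 9 * s * (y + 1) ≤ 9 * s * (2 * s) := Nat.mul_le_mul_left _ (by omega)
    have h3 : 9 * s * (2 * s) = 18 * s ^ 2 := by ring
    have h4 : 18 * s ^ 2 ≤ 24 * s ^ 2 := by nlinarith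
    omega
  have hsub : B ⊆ (Finset.range (K + 1) ×ˢ Finset.range (K + 1)).filter
      (fun q : ℕ × ℕ => 8 * s * q.1 + 9 * s * q.2 ≤ 8 * K) := by
    intro q hq
    rw [hB, Finset.mem_biUnion] at hq
    obtain ⟨y, hy, hq⟩ := hq
    rw [Finset.mem_image] at hq
    obtain ⟨x, hx, rfl⟩ := hq
    rw [Finset.mem_range] at hx hy
    have hxX : x ≤ X y := by omega
    have h9' := h9 y hy
    have hcond : 8 * s * x + 9 * s * y ≤ 8 * K := by
      have h1 : 8 * s * x ≤ 8 * s * X y := Nat.mul_le_mul_left _ hxX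
      have h2 : X y * (8 * s) ≤ 8 * K - 9 * s * y := Nat.div_mul_le_self _ _
      have h2' : 8 * s * X y = X y * (8 * s) := by ring
      zify [h9'] at h1 h2 h2' ⊢
      linarith
    rw [Finset.mem_filter, Finset.mem_product, Finset.mem_range, Finset.mem_range]
    have hxK : x < K + 1 := by
      have h8 : 8 * x ≤ 8 * s * x := by nlinarith
      omega
    have hyK : y < K + 1 := by
      have h2s : 2 * s ≤ 3 * s ^ 2 := by nlinarith
      omega
    exact ⟨⟨hxK, hyK⟩, hcond⟩
  have hcardB : B.card = ∑ y ∈ Finset.range (2 * s), (X y + 1) := by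
    rw [hB]
    rw [Finset.card_biUnion]
    · apply Finset.sum_congr rfl
      intro y _
      rw [Finset.card_image_of_injective _ (fun a b hab => by injection hab)]
      exact Finset.card_range _
    · intro y₁ h₁ y₂ h₂ hne
      simp only [Finset.disjoint_left, Finset.mem_image]
      rintro a ⟨x₁, -, rfl⟩ ⟨x₂, -, hx₂⟩
      exact hne (by injection hx₂ with h h'; omega)
  have hrow : ∀ y ∈ Finset.range (2 * s),
      8 * K + 1 ≤ 8 * s * (X y + 1) + 9 * s * y := by
    intro y hy
    rw [Finset.mem_range] at hy
    have h9' := h9 y hy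
    have hdm := Nat.div_add_mod (8 * K - 9 * s * y) (8 * s)
    have hmod : (8 * K - 9 * s * y) % (8 * s) < 8 * s := Nat.mod_lt _ (by positivity)
    have hexp : 8 * s * (X y + 1) = 8 * s * ((8 * K - 9 * s * y) / (8 * s)) + 8 * s := by
      rw [hX]; ring
    rw [hexp]
    zify [h9'] at hdm hmod ⊢
    linarith
  have hsum : (2 * s) * (8 * K + 1) ≤
      ∑ y ∈ Finset.range (2 * s), (8 * s * (X y + 1) + 9 * s * y) := by
    calc (2 * s) * (8 * K + 1) = ∑ _y ∈ Finset.range (2 * s), (8 * K + 1) := by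
          rw [Finset.sum_const, Finset.card_range, smul_eq_mul]
    _ ≤ _ := Finset.sum_le_sum hrow
  have hsplit : ∑ y ∈ Finset.range (2 * s), (8 * s * (X y + 1) + 9 * s * y)
      = 8 * s * (∑ y ∈ Finset.range (2 * s), (X y + 1))
        + 9 * s * (∑ y ∈ Finset.range (2 * s), y) := by
    rw [Finset.sum_add_distrib, Finset.mul_sum, Finset.mul_sum]
  have hgauss : 2 * (∑ y ∈ Finset.range (2 * s), y) = 2 * s * (2 * s - 1) := by
    have h := Finset.sum_range_id_mul_two (2 * s)
    omega
  set N := ∑ y ∈ Finset.range (2 * s), (X y + 1) with hN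
  rw [hsplit] at hsum
  have h8s : 0 < 8 * s := by positivity
  have hfin : 8 * s * (K + 2) ≤ 8 * s * N := by
    set T := ∑ y ∈ Finset.range (2 * s), y with hT
    have hgauss' : 2 * T = 4 * s ^ 2 - 2 * s := by
      have : 2 * s * (2 * s - 1) = 4 * s ^ 2 - 2 * s := by
        have h4 : 2 * s * (2 * s) = 4 * s ^ 2 := by ring
        have h5 : 2 * s * (2 * s - 1) = 2 * s * (2 * s) - 2 * s * 1 := Nat.mul_sub _ _ _
        omega
      omega
    have hss : 2 * s ≤ 4 * s ^ 2 := by nlinarith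
    zify [hss] at hgauss' hsum hK hs ⊢
    nlinarith [hsum, hgauss', hK, hs,
      mul_le_mul_of_nonneg_left hK (by positivity : (0:ℤ) ≤ 8 * s)]
  calc K + 2 ≤ N := Nat.le_of_mul_le_mul_left hfin h8s
  _ = B.card := hcardB.symm
  _ ≤ _ := Finset.card_le_card hsub

lemma rpow_le_nat_pow {a b s : ℕ} (hs : 0 < s) (h : (a : ℝ) ^ ((1:ℝ)/s) ≤ (b : ℝ)) :
    a ≤ b ^ s := by
  have hsne : (s : ℝ) ≠ 0 := Nat.cast_ne_zero.2 hs.ne'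
  have ha0 : (0:ℝ) ≤ (a : ℝ) := Nat.cast_nonneg a
  have h1 : ((a : ℝ) ^ ((1:ℝ)/s)) ^ s ≤ (b : ℝ) ^ s :=
    pow_le_pow_left₀ (Real.rpow_nonneg ha0 _) h s
  have h2 : ((a : ℝ) ^ ((1:ℝ)/s)) ^ s = (a : ℝ) := by
    rw [← Real.rpow_natCast ((a : ℝ) ^ ((1:ℝ)/s)) s, ← Real.rpow_mul ha0,
      one_div_mul_cancel hsne, Real.rpow_one]
  rw [h2] at h1
  exact_mod_cast h1

lemma prime_pow_mul_inj {p q : ℕ} (hp : p.Prime) (hq : q.Prime) (hne : p ≠ q)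
    {a b c d : ℕ} (h : p ^ a * q ^ b = p ^ c * q ^ d) : a = c ∧ b = d := by
  have key : ∀ x y : ℕ, (p ^ x * q ^ y).factorization p = x ∧
      (p ^ x * q ^ y).factorization q = y := by
    intro x y
    rw [Nat.factorization_mul (pow_ne_zero _ hp.pos.ne') (pow_ne_zero _ hq.pos.ne'),
      hp.factorization_pow, hq.factorization_pow]
    simp [Finsupp.single_apply, hne, Ne.symm hne]
  constructor
  · have h1 := (key a b).1
    rw [h, (key c d).1] at h1
    omega
  · have h1 := (key a b).2
    rw [h, (key c d).2] at h1
    omega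

lemma odd_branch (p₀ p₁ p₂ s e f₁ f₂ K : ℕ) (hp₀ : p₀.Prime) (hp₁ : p₁.Prime)
    (hp₂ : p₂.Prime) (h01 : p₀ ≠ p₁) (h02 : p₀ ≠ p₂) (h12 : p₁ < p₂)
    (hs : 0 < s) (heK : e = K + 1) (hK : 3 * s ^ 2 ≤ K)
    (hoddp₀ : Odd p₀)
    (hf₁ : 0 < f₁) (hf₂ : 0 < f₂)
    (hσ₁ : σ 1 (p₁ ^ K) = ∑ i ∈ range e, p₁ ^ i)
    (hσ₂ : σ 1 (p₂ ^ K) = ∑ i ∈ range e, p₂ ^ i)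
    (hd₁ : p₀ ^ f₁ ∣ σ 1 (p₁ ^ K))
    (hd₂ : p₀ ^ f₂ ∣ σ 1 (p₂ ^ K))
    (hPs : p₁ ^ K ≤ (p₀ ^ min f₁ f₂) ^ s)
    (hnat : p₂ ^ 8 ≤ p₁ ^ 9) : False := by
  set m := min f₁ f₂ with hm
  have hmpos : 0 < m := by omega
  haveI : NeZero (p₀ ^ m) := ⟨pow_ne_zero m hp₀.pos.ne'⟩
  have hepos : 0 < e := by omega
  have hu : ∀ (p : ℕ), p.Prime → (∀ f, m ≤ f → p₀ ^ f ∣ σ 1 (p ^ K) →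
      σ 1 (p ^ K) = ∑ i ∈ range e, p ^ i → ((p : ZMod (p₀ ^ m)) ^ e = 1)) := by
    intro p hp f hf hd hσ
    have h1 : p₀ ^ m ∣ σ 1 (p ^ K) := dvd_trans (pow_dvd_pow p₀ hf) hd
    have h2 : (σ 1 (p ^ K) : ℤ) ∣ (p : ℤ) ^ e - 1 := by
      refine ⟨(p : ℤ) - 1, ?_⟩
      rw [hσ]
      push_cast
      rw [← geom_sum_mul]
    have h3 : ((p₀ ^ m : ℕ) : ℤ) ∣ (p : ℤ) ^ e - 1 :=
      dvd_trans (Int.natCast_dvd_natCast.2 h1) h2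
    have h4 : (((p : ℤ) ^ e - 1 : ℤ) : ZMod (p₀ ^ m)) = 0 :=
      (ZMod.intCast_zmod_eq_zero_iff_dvd _ _).2 h3
    push_cast at h4
    linear_combination h4
  have hu₁ : (p₁ : ZMod (p₀ ^ m)) ^ e = 1 := hu p₁ hp₁ f₁ (by omega) hd₁ hσ₁
  have hu₂ : (p₂ : ZMod (p₀ ^ m)) ^ e = 1 := hu p₂ hp₂ f₂ (by omega) hd₂ hσ₂
  have hbound : ∀ x y : ℕ, 8 * s * x + 9 * s * y ≤ 8 * K → p₁ ^ x * p₂ ^ y ≤ p₀ ^ m := by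
    intro x y hxy
    have h1 : (p₁ ^ x * p₂ ^ y) ^ (8 * s) ≤ (p₀ ^ m) ^ (8 * s) := by
      have e1 : (p₁ ^ x * p₂ ^ y) ^ (8 * s) = p₁ ^ (x * (8 * s)) * (p₂ ^ 8) ^ (y * s) := by
        rw [mul_pow, ← pow_mul, ← pow_mul, ← pow_mul]
        congr 2
        ring
      rw [e1]
      have h2 : (p₂ ^ 8) ^ (y * s) ≤ (p₁ ^ 9) ^ (y * s) := Nat.pow_le_pow_left hnat _
      calc p₁ ^ (x * (8 * s)) * (p₂ ^ 8) ^ (y * s)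
          ≤ p₁ ^ (x * (8 * s)) * (p₁ ^ 9) ^ (y * s) := Nat.mul_le_mul_left _ h2
      _ = p₁ ^ (x * (8 * s) + 9 * (y * s)) := by rw [← pow_mul, ← pow_add]
      _ ≤ p₁ ^ (K * 8) := by
            apply Nat.pow_le_pow_right hp₁.pos
            have hr : x * (8 * s) + 9 * (y * s) = 8 * s * x + 9 * s * y := by ring
            omega
      _ = (p₁ ^ K) ^ 8 := by rw [← pow_mul]
      _ ≤ ((p₀ ^ m) ^ s) ^ 8 := Nat.pow_le_pow_left hPs _
      _ = (p₀ ^ m) ^ (8 * s) := by rw [← pow_mul]; congr 1; ring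
    exact (pow_le_pow_iff_left₀ (Nat.zero_le _) (Nat.zero_le _) (by positivity)).1 h1
  -- finsets
  set T := ((Finset.range (K + 1) ×ˢ Finset.range (K + 1)).filter
      (fun q : ℕ × ℕ => 8 * s * q.1 + 9 * s * q.2 ≤ 8 * K)) with hT
  set S := (Finset.univ.filter fun z : ZMod (p₀ ^ m) => z ^ e = 1) with hS
  set F : ℕ × ℕ → ZMod (p₀ ^ m) :=
    fun q => (p₁ : ZMod (p₀ ^ m)) ^ q.1 * (p₂ : ZMod (p₀ ^ m)) ^ q.2 with hF
  have hmaps : ∀ q ∈ T, F q ∈ S := by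
    intro q hq
    rw [hS, mem_filter]
    refine ⟨Finset.mem_univ _, ?_⟩
    rw [hF]
    have e1 : ((p₁ : ZMod (p₀ ^ m)) ^ q.1 * (p₂ : ZMod (p₀ ^ m)) ^ q.2) ^ e
        = ((p₁ : ZMod (p₀ ^ m)) ^ e) ^ q.1 * ((p₂ : ZMod (p₀ ^ m)) ^ e) ^ q.2 := by
      rw [mul_pow, ← pow_mul, ← pow_mul, ← pow_mul, ← pow_mul, mul_comm q.1 e, mul_comm q.2 e]
    rw [e1, hu₁, hu₂, one_pow, one_pow, one_mul]
  have hinj : Set.InjOn F T := by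
    intro q hq q' hq' heq
    simp only [hT, Finset.coe_filter, Set.mem_setOf_eq, Finset.mem_product,
      Finset.mem_range] at hq hq'
    obtain ⟨-, hq⟩ := hq; obtain ⟨-, hq'⟩ := hq'
    have hA : p₁ ^ q.1 * p₂ ^ q.2 ≤ p₀ ^ m := hbound _ _ hq
    have hB : p₁ ^ q'.1 * p₂ ^ q'.2 ≤ p₀ ^ m := hbound _ _ hq'
    have hA1 : 1 ≤ p₁ ^ q.1 * p₂ ^ q.2 :=
      Nat.mul_pos (pow_pos hp₁.pos _) (pow_pos hp₂.pos _)
    have hB1 : 1 ≤ p₁ ^ q'.1 * p₂ ^ q'.2 :=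
      Nat.mul_pos (pow_pos hp₁.pos _) (pow_pos hp₂.pos _)
    have hc : ((p₁ ^ q.1 * p₂ ^ q.2 : ℕ) : ZMod (p₀ ^ m))
        = ((p₁ ^ q'.1 * p₂ ^ q'.2 : ℕ) : ZMod (p₀ ^ m)) := by
      push_cast
      exact heq
    have hmod := (ZMod.natCast_eq_natCast_iff _ _ _).1 hc
    have hdvd : ((p₀ ^ m : ℕ) : ℤ) ∣ ((p₁ ^ q'.1 * p₂ ^ q'.2 : ℕ) : ℤ)
        - ((p₁ ^ q.1 * p₂ ^ q.2 : ℕ) : ℤ) := hmod.dvd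
    have heqnat : p₁ ^ q.1 * p₂ ^ q.2 = p₁ ^ q'.1 * p₂ ^ q'.2 := by
      have h0 : ((p₁ ^ q'.1 * p₂ ^ q'.2 : ℕ) : ℤ)
          - ((p₁ ^ q.1 * p₂ ^ q.2 : ℕ) : ℤ) = 0 := by
        apply Int.eq_zero_of_abs_lt_dvd hdvd
        rw [abs_sub_lt_iff]
        constructor <;> (zify at hA hB hA1 hB1; push_cast; omega)
      have h1 := sub_eq_zero.1 h0
      exact_mod_cast h1.symm
    obtain ⟨h1, h2⟩ := prime_pow_mul_inj hp₁ hp₂ (by omega) heqnat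
    exact Prod.ext h1 h2
  have hc1 := count_lower s K hs hK
  have hc2 := Finset.card_le_card_of_injOn F hmaps hinj
  have hc3 := roots_count_le p₀ m e hp₀ hoddp₀ hmpos hepos
  rw [← hT] at hc1
  rw [← hS] at hc3
  omega

/-- Let `p₀, p₁, p₂` be distinct primes with `p₂ > p₁` and let `s` be a positive
integer. If `e` is an integer with `e > 3s²`, and there exist positive integers
`f₁, f₂` such that `p₀^{f_i}` divides `σ(p_i^{e−1})` and
`p₀^{f_i} ≥ σ(p_i^{e−1})^{1/s}` for `i = 1, 2`, then `log p₂ > (9/8)·log p₁`. -/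
theorem stmt_6 (p₀ p₁ p₂ s e f₁ f₂ : ℕ) (hp₀ : p₀.Prime) (hp₁ : p₁.Prime)
    (hp₂ : p₂.Prime) (h01 : p₀ ≠ p₁) (h02 : p₀ ≠ p₂) (h12 : p₁ < p₂)
    (hs : 0 < s) (he : 3 * s ^ 2 < e) (hf₁ : 0 < f₁) (hf₂ : 0 < f₂)
    (hd₁ : p₀ ^ f₁ ∣ σ 1 (p₁ ^ (e - 1)))
    (hd₂ : p₀ ^ f₂ ∣ σ 1 (p₂ ^ (e - 1)))
    (hg₁ : ((σ 1 (p₁ ^ (e - 1)) : ℕ) : ℝ) ^ ((1 : ℝ) / s) ≤ ((p₀ ^ f₁ : ℕ) : ℝ))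
    (hg₂ : ((σ 1 (p₂ ^ (e - 1)) : ℕ) : ℝ) ^ ((1 : ℝ) / s) ≤ ((p₀ ^ f₂ : ℕ) : ℝ)) :
    Real.log p₂ > 9 / 8 * Real.log p₁ := by
  by_contra hcon
  push_neg at hcon
  have hnat : p₂ ^ 8 ≤ p₁ ^ 9 := by
    have h1 : Real.log ((p₂ : ℝ) ^ (8:ℕ)) ≤ Real.log ((p₁ : ℝ) ^ (9:ℕ)) := by
      rw [Real.log_pow, Real.log_pow]
      push_cast
      linarith
    have h2 : (0:ℝ) < (p₂ : ℝ) ^ (8:ℕ) := by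
      have h0 : (0:ℝ) < (p₂ : ℝ) := by exact_mod_cast hp₂.pos
      positivity
    have h3 : (0:ℝ) < (p₁ : ℝ) ^ (9:ℕ) := by
      have h0 : (0:ℝ) < (p₁ : ℝ) := by exact_mod_cast hp₁.pos
      positivity
    have h4 := (Real.log_le_log_iff h2 h3).1 h1
    exact_mod_cast h4
  set K := e - 1 with hKdef
  have heK : e = K + 1 := by omega
  have hK : 3 * s ^ 2 ≤ K := by omega
  have hKpos : 0 < K := by nlinarith
  have hσ₁ : σ 1 (p₁ ^ K) = ∑ i ∈ range e, p₁ ^ i := by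
    rw [sigma_one_apply_prime_pow hp₁, heK]
  have hσ₂ : σ 1 (p₂ ^ K) = ∑ i ∈ range e, p₂ ^ i := by
    rw [sigma_one_apply_prime_pow hp₂, heK]
  have hσ₁lb : p₁ ^ K ≤ σ 1 (p₁ ^ K) := by
    rw [hσ₁]
    exact Finset.single_le_sum (f := fun i => p₁ ^ i) (fun i _ => Nat.zero_le _)
      (Finset.mem_range.2 (by omega))
  have hσ₂lb : p₂ ^ K ≤ σ 1 (p₂ ^ K) := by
    rw [hσ₂]
    exact Finset.single_le_sum (f := fun i => p₂ ^ i) (fun i _ => Nat.zero_le _)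
      (Finset.mem_range.2 (by omega))
  have hup₁ : σ 1 (p₁ ^ K) ≤ (p₀ ^ f₁) ^ s := rpow_le_nat_pow hs hg₁
  have hup₂ : σ 1 (p₂ ^ K) ≤ (p₀ ^ f₂) ^ s := rpow_le_nat_pow hs hg₂
  have hd₁' : p₀ ^ f₁ ∣ σ 1 (p₁ ^ K) := hd₁
  have hd₂' : p₀ ^ f₂ ∣ σ 1 (p₂ ^ K) := hd₂
  rcases eq_or_ne p₀ 2 with h2 | hodd'
  · subst h2
    have hp₁3 : 3 ≤ p₁ := by
      have h0 := hp₁.two_le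
      omega
    have hp₁odd : p₁ % 2 = 1 := by
      rcases Nat.even_or_odd p₁ with hev | hod
      · exfalso
        have h0 := (Nat.Prime.even_iff hp₁).1 hev
        omega
      · exact Nat.odd_iff.1 hod
    have hdg : 2 ^ f₁ ∣ ∑ i ∈ range e, p₁ ^ i := by rw [← hσ₁]; exact hd₁'
    have hb := two_pow_le_of_dvd_geom p₁ e f₁ hp₁odd (by omega) hdg
    have hchain : p₁ ^ K < p₁ ^ K := by
      calc p₁ ^ K ≤ σ 1 (p₁ ^ K) := hσ₁lb
      _ ≤ (2 ^ f₁) ^ s := hup₁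
      _ ≤ ((p₁ + 1) * e) ^ s := Nat.pow_le_pow_left hb s
      _ = ((p₁ + 1) * (K + 1)) ^ s := by rw [heK]
      _ < p₁ ^ K := p_plus_one_K_lt p₁ s K hp₁3 hs hK
    omega
  · have hoddp₀ : Odd p₀ := hp₀.odd_of_ne_two hodd'
    have hPs : p₁ ^ K ≤ (p₀ ^ min f₁ f₂) ^ s := by
      rcases min_cases f₁ f₂ with ⟨hmin, -⟩ | ⟨hmin, -⟩
      · calc p₁ ^ K ≤ σ 1 (p₁ ^ K) := hσ₁lb
        _ ≤ (p₀ ^ f₁) ^ s := hup₁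
        _ = (p₀ ^ min f₁ f₂) ^ s := by rw [hmin]
      · calc p₁ ^ K ≤ p₂ ^ K := Nat.pow_le_pow_left h12.le K
        _ ≤ σ 1 (p₂ ^ K) := hσ₂lb
        _ ≤ (p₀ ^ f₂) ^ s := hup₂
        _ = (p₀ ^ min f₁ f₂) ^ s := by rw [hmin]
    exact odd_branch p₀ p₁ p₂ s e f₁ f₂ K hp₀ hp₁ hp₂ h01 h02 h12 hs heK hK hoddp₀
      hf₁ hf₂ hσ₁ hσ₂ hd₁' hd₂' hPs hnat
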